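/- Let I : ℤ×ℤ → ℝ be a finitely supported function with I ≠ 0, and fix positive integers s₁, s₂. Then there exists τ > 0 such that ‖I⊗X‖_F ≥ τ·‖X‖_F for every function X supported in the s₁×s₂ grid. (In other words, the smallest convolution eigenvalue σ_min(I) of a nonzero image is strictly positive, i.e. the associated Toeplitz operator is nonsingular.) -/

import Mathlib

/-- Images, kernels, and filters: finitely supported functions `ℤ × ℤ → ℝ`. -/
abbrev Img := (ℤ × ℤ) →₀ ℝ

/-- Discrete 2D convolution: `(X ⊗ Y)(i,j) = ∑_{(u,v)} X((i,j)-(u,v)) * Y(u,v)`. -/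
noncomputable def conv (X Y : Img) : Img :=
  X.sum fun a xa => Y.sum fun b yb => Finsupp.single (a + b) (xa * yb)

/-- Frobenius norm `‖X‖_F = √(∑ X(i,j)²)`. -/
noncomputable def frob (X : Img) : ℝ := Real.sqrt (X.sum fun _ c => c ^ 2)

/-- Inner product `⟨X, Y⟩ = ∑ X(i,j) * Y(i,j)`. -/
noncomputable def inner2 (X Y : Img) : ℝ := X.sum fun p c => c * Y p

/-- ℓ¹ norm `‖X‖₁ = ∑ |X(i,j)|`. -/
noncomputable def l1 (X : Img) : ℝ := X.sum fun _ c => |c|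

/-- The simplex `S` of blur kernels: nonnegative entries summing to one. -/
def InSimplex (K : Img) : Prop := (∀ p, 0 ≤ K p) ∧ (K.sum fun _ c => c) = 1

/-- `X` is supported in the `a × b` grid `{0,…,a-1} × {0,…,b-1}`. -/
def SuppIn (a b : ℕ) (X : Img) : Prop :=
  ∀ p : ℤ × ℤ, ¬(0 ≤ p.1 ∧ p.1 < (a : ℤ) ∧ 0 ≤ p.2 ∧ p.2 < (b : ℤ)) → X p = 0

open Pointwise Finset

noncomputable def toA (X : Img) : AddMonoidAlgebra ℝ (ℤ × ℤ) := AddMonoidAlgebra.ofCoeff X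

lemma conv_eq_mul (X Y : Img) : conv X Y = (toA X * toA Y).coeff := by
  simp [conv, toA, AddMonoidAlgebra.mul_def, AddMonoidAlgebra.coeff_finsuppSum,
    AddMonoidAlgebra.coeff_single]

lemma toA_add (X Y : Img) : toA (X + Y) = toA X + toA Y := rfl
lemma toA_smul (r : ℝ) (X : Img) : toA (r • X) = r • toA X := rfl

lemma conv_add (X Y Z : Img) : conv X (Y + Z) = conv X Y + conv X Z := by
  simp only [conv_eq_mul, toA_add, mul_add, AddMonoidAlgebra.coeff_add]

lemma conv_smul (X : Img) (r : ℝ) (Y : Img) : conv X (r • Y) = r • conv X Y := by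
  simp only [conv_eq_mul, toA_smul, mul_smul_comm, AddMonoidAlgebra.coeff_smul]

/-- coordinate embedding -/
def coord {s₁ s₂ : ℕ} (ij : Fin s₁ × Fin s₂) : ℤ × ℤ := ((ij.1 : ℤ), (ij.2 : ℤ))

lemma coord_inj {s₁ s₂ : ℕ} : Function.Injective (coord (s₁ := s₁) (s₂ := s₂)) := by
  intro a b h
  simp only [coord, Prod.ext_iff] at h
  exact Prod.ext (Fin.ext (by exact_mod_cast h.1)) (Fin.ext (by exact_mod_cast h.2))

noncomputable def emb (s₁ s₂ : ℕ) : EuclideanSpace ℝ (Fin s₁ × Fin s₂) →ₗ[ℝ] Img where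
  toFun x := ∑ ij : Fin s₁ × Fin s₂, Finsupp.single (coord ij) (x ij)
  map_add' x y := by
    simp only [PiLp.add_apply, Finsupp.single_add, Finset.sum_add_distrib]
  map_smul' r x := by
    simp only [PiLp.smul_apply, smul_eq_mul, RingHom.id_apply, Finset.smul_sum,
      Finsupp.smul_single]

lemma emb_apply_coord {s₁ s₂ : ℕ} (x : EuclideanSpace ℝ (Fin s₁ × Fin s₂))
    (ij : Fin s₁ × Fin s₂) : emb s₁ s₂ x (coord ij) = x ij := by
  classical
  rw [emb]
  simp only [LinearMap.coe_mk, AddHom.coe_mk, Finsupp.finset_sum_apply, Finsupp.single_apply]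
  rw [Finset.sum_eq_single ij]
  · simp
  · intro b _ hb
    exact if_neg (fun h => hb (coord_inj h))
  · simp

lemma emb_apply_ne {s₁ s₂ : ℕ} (x : EuclideanSpace ℝ (Fin s₁ × Fin s₂))
    (p : ℤ × ℤ) (hp : ∀ ij : Fin s₁ × Fin s₂, coord ij ≠ p) : emb s₁ s₂ x p = 0 := by
  classical
  rw [emb]
  simp only [LinearMap.coe_mk, AddHom.coe_mk, Finsupp.finset_sum_apply, Finsupp.single_apply]
  exact Finset.sum_eq_zero fun ij _ => if_neg (hp ij)

lemma emb_support_subset {s₁ s₂ : ℕ} (x : EuclideanSpace ℝ (Fin s₁ × Fin s₂)) :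
    (emb s₁ s₂ x).support ⊆ Finset.image (coord (s₁ := s₁) (s₂ := s₂)) Finset.univ := by
  intro p hp
  by_contra hc
  refine Finsupp.mem_support_iff.mp hp (emb_apply_ne x p fun ij h => ?_)
  exact hc (h ▸ Finset.mem_image_of_mem coord (Finset.mem_univ ij))

lemma frob_eq_of_subset (X : Img) (s : Finset (ℤ × ℤ)) (hs : X.support ⊆ s) :
    frob X = Real.sqrt (∑ p ∈ s, X p ^ 2) := by
  unfold frob Finsupp.sum
  congr 1
  exact Finset.sum_subset hs (fun p _ hp => by
    rw [Finsupp.notMem_support_iff.mp hp]; ring)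

lemma suppin_eq_emb {s₁ s₂ : ℕ} (X : Img) (hX : SuppIn s₁ s₂ X) :
    X = emb s₁ s₂ (WithLp.toLp 2 (fun ij => X (coord ij))) := by
  ext p
  by_cases h : 0 ≤ p.1 ∧ p.1 < (s₁ : ℤ) ∧ 0 ≤ p.2 ∧ p.2 < (s₂ : ℤ)
  · obtain ⟨h1, h2, h3, h4⟩ := h
    have hij : ∃ ij : Fin s₁ × Fin s₂, coord ij = p := by
      refine ⟨(⟨p.1.toNat, ?_⟩, ⟨p.2.toNat, ?_⟩), ?_⟩
      · omega
      · omega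
      · simp [coord, Prod.ext_iff]; omega
    obtain ⟨ij, rfl⟩ := hij
    rw [emb_apply_coord]
  · rw [hX p h, emb_apply_ne]
    intro ij hij
    apply h
    rw [← hij]
    simp only [coord]
    exact ⟨Int.ofNat_nonneg _, by exact_mod_cast ij.1.isLt, Int.ofNat_nonneg _,
      by exact_mod_cast ij.2.isLt⟩

lemma frob_emb {s₁ s₂ : ℕ} (x : EuclideanSpace ℝ (Fin s₁ × Fin s₂)) :
    frob (emb s₁ s₂ x) = ‖x‖ := by
  classical
  rw [frob_eq_of_subset _ _ (emb_support_subset x),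
    Finset.sum_image (fun a _ b _ h => coord_inj h), EuclideanSpace.norm_eq]
  congr 1
  refine Finset.sum_congr rfl fun ij _ => ?_
  rw [emb_apply_coord, Real.norm_eq_abs, sq_abs]

/-- For a nonzero image, the smallest convolution eigenvalue is strictly positive:
the Toeplitz operator is nonsingular. -/
theorem exists_pos_frob_conv_lower_bound
    (I : Img) (hI : I ≠ 0) (s₁ s₂ : ℕ) (hs₁ : 0 < s₁) (hs₂ : 0 < s₂) :
    ∃ τ : ℝ, 0 < τ ∧ ∀ X : Img, SuppIn s₁ s₂ X → τ * frob X ≤ frob (conv I X) := by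
  classical
  set G : Finset (ℤ × ℤ) := Finset.image coord (Finset.univ : Finset (Fin s₁ × Fin s₂)) with hG
  set S : Finset (ℤ × ℤ) := I.support + G with hS
  -- support of conv
  have hsupp : ∀ x : EuclideanSpace ℝ (Fin s₁ × Fin s₂),
      (conv I (emb s₁ s₂ x)).support ⊆ S := by
    intro x
    rw [conv_eq_mul]
    refine (AddMonoidAlgebra.support_coeff_mul_subset (toA I) (toA (emb s₁ s₂ x))).trans ?_
    exact Finset.add_subset_add_left (emb_support_subset x)
  -- the linear map
  let T : EuclideanSpace ℝ (Fin s₁ × Fin s₂) →ₗ[ℝ] EuclideanSpace ℝ ↥S :=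
    { toFun := fun x => WithLp.toLp 2 (fun p => conv I (emb s₁ s₂ x) (p : ℤ × ℤ))
      map_add' := fun x y => by
        ext p
        simp only [map_add, conv_add, Finsupp.add_apply]
        rfl
      map_smul' := fun r x => by
        ext p
        simp only [map_smul, conv_smul, Finsupp.smul_apply, RingHom.id_apply]
        rfl }
  have hTnorm : ∀ x, ‖T x‖ = frob (conv I (emb s₁ s₂ x)) := by
    intro x
    rw [EuclideanSpace.norm_eq, frob_eq_of_subset _ _ (hsupp x)]
    congr 1
    rw [← Finset.sum_coe_sort S]
    refine Finset.sum_congr rfl fun p _ => ?_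
    rw [Real.norm_eq_abs, sq_abs]
    rfl
  have hker : LinearMap.ker T = ⊥ := by
    rw [LinearMap.ker_eq_bot']
    intro x hx
    have hconv : conv I (emb s₁ s₂ x) = 0 := by
      ext p
      by_cases hp : p ∈ S
      · have := congrArg (fun v => v (⟨p, hp⟩ : ↥S)) hx
        exact this
      · simp only [Finsupp.coe_zero, Pi.zero_apply]
        exact Finsupp.notMem_support_iff.mp (fun h => hp (hsupp x h))
    have hemb : emb s₁ s₂ x = 0 := by
      rw [conv_eq_mul] at hconv
      have h0 : toA I * toA (emb s₁ s₂ x) = 0 := congrArg AddMonoidAlgebra.ofCoeff hconv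
      rcases (mul_eq_zero (M₀ := AddMonoidAlgebra ℝ (ℤ × ℤ))).mp h0 with h | h
      · exact absurd (congrArg AddMonoidAlgebra.coeff h) hI
      · exact congrArg AddMonoidAlgebra.coeff h
    ext ij
    have := emb_apply_coord x ij
    rw [hemb] at this
    simpa using this.symm
  obtain ⟨K, hK, hanti⟩ := LinearMap.exists_antilipschitzWith T hker
  refine ⟨(K : ℝ)⁻¹, by positivity, fun X hX => ?_⟩
  set x : EuclideanSpace ℝ (Fin s₁ × Fin s₂) := WithLp.toLp 2 (fun ij => X (coord ij)) with hx
  have hXemb : X = emb s₁ s₂ x := suppin_eq_emb X hX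
  have h1 : ‖x‖ ≤ K * ‖T x‖ := by
    have := hanti.le_mul_dist x 0
    simpa [map_zero] using this
  rw [hXemb, frob_emb, ← hTnorm]
  rw [inv_mul_le_iff₀ (by exact_mod_cast hK)]
  linarith
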